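/- Let f_1, …, f_n : ℝ^d → ℝ each be differentiable, L-smooth and μ-strongly convex with 0 < μ ≤ L, let f := (1/n)·Σᵢ f_i with minimizer x* ∈ ℝ^d, and let 0 < α ≤ 1/(4L). Then for any points x_1, …, x_n ∈ ℝ^d, with x̄ := (1/n)·Σᵢ x_i: ‖x̄ − (α/n)·Σ_{i=1}^n ∇f_i(x_i) − x*‖² ≤ (1 − αμ/2)·‖x̄ − x*‖² − α·( f(x̄) − f(x*) ) + (5αL/(2n))·Σ_{i=1}^n ‖x̄ − x_i‖². -/

import Mathlib

open Finset InnerProductSpace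

local notation "⟪" x ", " y "⟫" => @inner ℝ _ _ x y

section aux
variable {F : Type*} [NormedAddCommGroup F] [InnerProductSpace ℝ F] [CompleteSpace F]

lemma sgd_line_hasDerivAt (f : F → ℝ) (hf : Differentiable ℝ f) (y v : F) (t : ℝ) :
    HasDerivAt (fun s : ℝ => f (y + s • v)) ⟪gradient f (y + t • v), v⟫ t := by
  have hc : HasDerivAt (fun s : ℝ => y + s • v) v t := by
    simpa using ((hasDerivAt_id t).smul_const v).const_add y
  have hg : HasFDerivAt f (toDual ℝ F (gradient f (y + t • v))) (y + t • v) :=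
    hasGradientAt_iff_hasFDerivAt.mp (hf _).hasGradientAt
  exact hg.comp_hasDerivAt t hc

/-- Descent lemma for `L`-smooth functions. -/
lemma sgd_descent_lemma (f : F → ℝ) (hf : Differentiable ℝ f) {L : ℝ}
    (hsm : ∀ a b : F, ‖gradient f a - gradient f b‖ ≤ L * ‖a - b‖) (y z : F) :
    f z ≤ f y + ⟪gradient f y, z - y⟫ + L / 2 * ‖z - y‖ ^ 2 := by
  set v := z - y with hv
  set c : ℝ := ⟪gradient f y, v⟫ with hc
  set ψ : ℝ → ℝ := fun t => f (y + t • v) - (t * c + L / 2 * t ^ 2 * ‖v‖ ^ 2) with hψ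
  have hder : ∀ t : ℝ, HasDerivAt ψ
      (⟪gradient f (y + t • v), v⟫ - (c + L / 2 * (2 * t) * ‖v‖ ^ 2)) t := by
    intro t
    have h1 := sgd_line_hasDerivAt f hf y v t
    have h2 : HasDerivAt (fun t : ℝ => t * c + L / 2 * t ^ 2 * ‖v‖ ^ 2)
        (c + L / 2 * (2 * t) * ‖v‖ ^ 2) t := by
      have := ((hasDerivAt_id t).mul_const c).add
        ((((hasDerivAt_pow 2 t).const_mul (L / 2))).mul_const (‖v‖ ^ 2))
      exact this.congr_deriv (by norm_num)
    exact h1.sub h2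
  have hmono : AntitoneOn ψ (Set.Icc (0:ℝ) 1) := by
    apply antitoneOn_of_hasDerivWithinAt_nonpos (convex_Icc 0 1)
    · exact fun t _ => (hder t).continuousAt.continuousWithinAt
    · intro t ht
      exact (hder t).hasDerivWithinAt
    · intro t ht
      rw [interior_Icc] at ht
      have hb : ⟪gradient f (y + t • v) - gradient f y, v⟫ ≤ L * t * ‖v‖ ^ 2 := by
        calc ⟪gradient f (y + t • v) - gradient f y, v⟫
            ≤ ‖gradient f (y + t • v) - gradient f y‖ * ‖v‖ := real_inner_le_norm _ _
          _ ≤ (L * ‖(y + t • v) - y‖) * ‖v‖ :=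
              mul_le_mul_of_nonneg_right (hsm _ _) (norm_nonneg v)
          _ = L * t * ‖v‖ ^ 2 := by
              rw [add_sub_cancel_left, norm_smul]
              simp [abs_of_pos ht.1, sq]; ring
      have : ⟪gradient f (y + t • v), v⟫ - ⟪gradient f y, v⟫ ≤ L * t * ‖v‖ ^ 2 := by
        rwa [← inner_sub_left]
      simp only [hc]
      nlinarith
  have h01 := hmono (Set.mem_Icc.mpr ⟨le_refl 0, zero_le_one⟩)
      (Set.mem_Icc.mpr ⟨zero_le_one, le_refl 1⟩) zero_le_one
  simp only [hψ, one_smul, zero_smul, add_zero] at h01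
  have : y + v = z := by rw [hv]; abel
  rw [this] at h01
  nlinarith [h01]

/-- Gradient inequality for `μ`-strongly convex functions. -/
lemma sgd_strong_lower (f : F → ℝ) (hf : Differentiable ℝ f) {μ : ℝ}
    (hc : ConvexOn ℝ Set.univ (fun x : F => f x - μ / 2 * ‖x‖ ^ 2)) (y z : F) :
    f y + ⟪gradient f y, z - y⟫ + μ / 2 * ‖z - y‖ ^ 2 ≤ f z := by
  set v := z - y with hv
  set φ : ℝ → ℝ := fun t =>
    f (y + t • v) - μ / 2 * (‖y‖ ^ 2 + 2 * t * ⟪y, v⟫ + t ^ 2 * ‖v‖ ^ 2) with hφ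
  have hφeq : φ = (fun x : F => f x - μ / 2 * ‖x‖ ^ 2) ∘ (AffineMap.lineMap y (y + v)) := by
    funext t
    simp only [hφ, Function.comp_apply, AffineMap.lineMap_apply, vadd_eq_add, vsub_eq_sub,
      add_sub_cancel_left]
    have h1 : ‖t • v + y‖ ^ 2 = ‖y‖ ^ 2 + 2 * t * ⟪y, v⟫ + t ^ 2 * ‖v‖ ^ 2 := by
      rw [norm_add_sq_real, real_inner_smul_left, norm_smul]
      rw [real_inner_comm]
      simp [mul_pow, sq_abs]
      ring
    rw [add_comm y (t • v), h1]
  have hφc : ConvexOn ℝ Set.univ φ := by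
    rw [hφeq]
    simpa using hc.comp_affineMap (AffineMap.lineMap y (y + v))
  have hder : HasDerivAt φ (⟪gradient f y, v⟫ - μ / 2 * (2 * ⟪y, v⟫)) 0 := by
    have h1 := sgd_line_hasDerivAt f hf y v 0
    rw [zero_smul, add_zero] at h1
    have h2 : HasDerivAt (fun t : ℝ =>
        μ / 2 * (‖y‖ ^ 2 + 2 * t * ⟪y, v⟫ + t ^ 2 * ‖v‖ ^ 2))
        (μ / 2 * (2 * ⟪y, v⟫ + 2 * 0 * ‖v‖ ^ 2)) 0 := by
      have h3 : HasDerivAt (fun t : ℝ => ‖y‖ ^ 2 + 2 * t * ⟪y, v⟫ + t ^ 2 * ‖v‖ ^ 2)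
          (2 * ⟪y, v⟫ + 2 * 0 * ‖v‖ ^ 2) 0 := by
        have ha : HasDerivAt (fun t : ℝ => 2 * t * ⟪y, v⟫) (2 * ⟪y, v⟫) 0 := by
          simpa [mul_comm, mul_assoc] using
            (((hasDerivAt_id (0:ℝ)).const_mul 2).mul_const ⟪y, v⟫)
        have hb : HasDerivAt (fun t : ℝ => t ^ 2 * ‖v‖ ^ 2) (2 * 0 * ‖v‖ ^ 2) 0 := by
          simpa using (hasDerivAt_pow 2 (0:ℝ)).mul_const (‖v‖ ^ 2)
        exact (ha.const_add (‖y‖ ^ 2)).add hb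
      simpa using h3.const_mul (μ / 2)
    exact (h1.sub h2).congr_deriv (by ring)
  have hs := hφc.le_slope_of_hasDerivAt (Set.mem_univ (0:ℝ)) (Set.mem_univ (1:ℝ))
      zero_lt_one hder
  rw [slope_def_field] at hs
  have hφ1 : φ 1 = f z - μ / 2 * (‖y‖ ^ 2 + 2 * ⟪y, v⟫ + ‖v‖ ^ 2) := by
    simp only [hφ, one_smul, one_pow]
    have : y + v = z := by rw [hv]; abel
    rw [this]; ring_nf
  have hφ0 : φ 0 = f y - μ / 2 * ‖y‖ ^ 2 := by simp [hφ]
  rw [hφ1, hφ0] at hs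
  have h10 : ((1:ℝ) - 0) = 1 := by norm_num
  rw [h10, div_one] at hs
  nlinarith [hs]

end aux

open Finset

set_option maxHeartbeats 1000000 in
theorem avg_gradient_step_contraction {d n : ℕ} (hn : 0 < n) (L μ α : ℝ)
    (hμ0 : 0 < μ) (hμL : μ ≤ L) (hα0 : 0 < α) (hα : α ≤ 1 / (4 * L))
    (f : Fin n → EuclideanSpace ℝ (Fin d) → ℝ)
    (hdiff : ∀ i, Differentiable ℝ (f i))
    (hsmooth : ∀ i, ∀ x y : EuclideanSpace ℝ (Fin d),
      ‖gradient (f i) x - gradient (f i) y‖ ≤ L * ‖x - y‖)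
    (hconv : ∀ i, ConvexOn ℝ Set.univ (fun x : EuclideanSpace ℝ (Fin d) =>
      f i x - μ / 2 * ‖x‖ ^ 2))
    (xstar : EuclideanSpace ℝ (Fin d))
    (hstar : ∀ y : EuclideanSpace ℝ (Fin d),
      (n : ℝ)⁻¹ * ∑ i, f i xstar ≤ (n : ℝ)⁻¹ * ∑ i, f i y)
    (x : Fin n → EuclideanSpace ℝ (Fin d)) :
    ‖(n : ℝ)⁻¹ • (∑ j, x j) - (α / n) • (∑ i, gradient (f i) (x i)) - xstar‖ ^ 2
      ≤ (1 - α * μ / 2) * ‖(n : ℝ)⁻¹ • (∑ j, x j) - xstar‖ ^ 2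
        - α * ((n : ℝ)⁻¹ * ∑ i, f i ((n : ℝ)⁻¹ • ∑ j, x j)
               - (n : ℝ)⁻¹ * ∑ i, f i xstar)
        + (5 * α * L / (2 * n)) * ∑ i, ‖(n : ℝ)⁻¹ • (∑ j, x j) - x i‖ ^ 2 := by
  have hL0 : (0:ℝ) < L := lt_of_lt_of_le hμ0 hμL
  have hn0 : (0:ℝ) < (n:ℝ) := by exact_mod_cast hn
  have hni0 : (0:ℝ) ≤ (n:ℝ)⁻¹ := by positivity
  have hni : (n:ℝ)⁻¹ * (n:ℝ) = 1 := inv_mul_cancel₀ hn0.ne'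
  have hαL : α * L ≤ 1/4 := by
    calc α * L ≤ (1/(4*L)) * L := mul_le_mul_of_nonneg_right hα hL0.le
      _ = 1/4 := by field_simp
  -- rewrite the step direction
  have hstep : (α / (n:ℝ)) • (∑ i, gradient (f i) (x i))
      = α • ((n:ℝ)⁻¹ • (∑ i, gradient (f i) (x i))) := by
    rw [div_eq_mul_inv, ← smul_smul]
  rw [hstep]
  set xb : EuclideanSpace ℝ (Fin d) := (n : ℝ)⁻¹ • (∑ j, x j) with hxb
  set g : EuclideanSpace ℝ (Fin d) := (n:ℝ)⁻¹ • (∑ i, gradient (f i) (x i)) with hgdef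
  set GF : EuclideanSpace ℝ (Fin d) := (n:ℝ)⁻¹ • (∑ i, gradient (f i) xb) with hGFdef
  set A : ℝ := ‖xb - xstar‖ ^ 2 with hA
  set S : ℝ := ∑ i, ‖xb - x i‖ ^ 2 with hS
  set FB : ℝ := (n : ℝ)⁻¹ * ∑ i, f i xb with hFB
  set FS : ℝ := (n : ℝ)⁻¹ * ∑ i, f i xstar with hFS
  clear_value xb g GF A S FB FS
  have hS0 : 0 ≤ S := by rw [hS]; exact Finset.sum_nonneg fun i _ => sq_nonneg _
  have hA0 : 0 ≤ A := by rw [hA]; exact sq_nonneg _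
  -- gradient of the average
  have hFgrad : ∀ y, HasGradientAt (fun y => (n : ℝ)⁻¹ * ∑ i, f i y)
      ((n : ℝ)⁻¹ • ∑ i, gradient (f i) y) y := by
    intro y
    rw [hasGradientAt_iff_hasFDerivAt]
    have hsum : HasFDerivAt (fun y => ∑ i, f i y)
        (∑ i, toDual ℝ _ (gradient (f i) y)) y :=
      HasFDerivAt.fun_sum fun i _ => hasGradientAt_iff_hasFDerivAt.mp ((hdiff i) y).hasGradientAt
    have h2 := hsum.const_mul ((n:ℝ)⁻¹)
    refine h2.congr_fderiv ?_
    ext w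
    simp [real_inner_smul_left, sum_inner]
  have hFdiff : Differentiable ℝ (fun y => (n : ℝ)⁻¹ * ∑ i, f i y) :=
    fun y => (hFgrad y).differentiableAt
  have hFg : ∀ y, gradient (fun y => (n : ℝ)⁻¹ * ∑ i, f i y) y
      = (n:ℝ)⁻¹ • ∑ i, gradient (f i) y := fun y => (hFgrad y).gradient
  -- averaging bound for norms
  have havg : ∀ (v : Fin n → EuclideanSpace ℝ (Fin d)) (c : Fin n → ℝ),
      (∀ i, ‖v i‖ ≤ c i) → ‖(n:ℝ)⁻¹ • ∑ i, v i‖ ≤ (n:ℝ)⁻¹ * ∑ i, c i := by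
    intro v c hc
    rw [norm_smul]
    simp only [norm_inv, Real.norm_natCast]
    exact mul_le_mul_of_nonneg_left
      ((norm_sum_le _ _).trans (Finset.sum_le_sum fun i _ => hc i)) hni0
  have hFlip : ∀ a b : EuclideanSpace ℝ (Fin d),
      ‖gradient (fun y => (n : ℝ)⁻¹ * ∑ i, f i y) a
        - gradient (fun y => (n : ℝ)⁻¹ * ∑ i, f i y) b‖ ≤ L * ‖a - b‖ := by
    intro a b
    rw [hFg, hFg, ← smul_sub, ← Finset.sum_sub_distrib]
    calc ‖(n:ℝ)⁻¹ • ∑ i, (gradient (f i) a - gradient (f i) b)‖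
        ≤ (n:ℝ)⁻¹ * ∑ _i : Fin n, L * ‖a - b‖ :=
          havg _ _ fun i => hsmooth i a b
      _ = (n:ℝ)⁻¹ * ((n:ℝ) * (L * ‖a - b‖)) := by
          rw [Finset.sum_const, card_univ, Fintype.card_fin, nsmul_eq_mul]
      _ = L * ‖a - b‖ := by rw [← mul_assoc, hni, one_mul]
  -- (H3)
  have hGF2 : ‖GF‖^2 ≤ 2 * L * (FB - FS) := by
    have hd := sgd_descent_lemma (fun y => (n : ℝ)⁻¹ * ∑ i, f i y) hFdiff hFlip xb
      (xb - L⁻¹ • GF)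
    rw [hFg xb, ← hGFdef, sub_sub_cancel_left, inner_neg_right, real_inner_smul_right,
      real_inner_self_eq_norm_sq, norm_neg, norm_smul] at hd
    beta_reduce at hd
    rw [← hFB] at hd
    have hmin := hstar (xb - L⁻¹ • GF)
    have hLn : ‖(L⁻¹ : ℝ)‖ = L⁻¹ := by
      rw [Real.norm_eq_abs, abs_of_pos (inv_pos.mpr hL0)]
    rw [hLn] at hd
    have hkey : L / 2 * (L⁻¹ * ‖GF‖)^2 = L⁻¹ / 2 * ‖GF‖^2 := by
      field_simp
    have h5 : L⁻¹ / 2 * ‖GF‖^2 ≤ FB - FS := by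
      rw [hkey] at hd
      linarith [hd, hmin]
    have h6 : ‖GF‖^2 = 2 * L * (L⁻¹ / 2 * ‖GF‖^2) := by
      field_simp
    rw [h6]
    exact mul_le_mul_of_nonneg_left h5 (by positivity)
  -- (H1)
  have hper : ∀ i, f i xb - f i xstar + μ/4 * A - (L+μ)/2 * ‖xb - x i‖^2
      ≤ ⟪gradient (f i) (x i), xb - xstar⟫ := by
    intro i
    have h1 := sgd_strong_lower (f i) (hdiff i) (hconv i) (x i) xstar
    have h2 := sgd_descent_lemma (f i) (hdiff i) (hsmooth i) (x i) xb
    have h3 : A ≤ 2*‖xb - x i‖^2 + 2*‖x i - xstar‖^2 := by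
      rw [hA]
      have h4 : xb - xstar = (xb - x i) + (x i - xstar) := by abel
      rw [h4]
      have hsq := mul_self_le_mul_self (norm_nonneg (xb - x i + (x i - xstar)))
        (norm_add_le (xb - x i) (x i - xstar))
      nlinarith [hsq, sq_nonneg (‖xb - x i‖ - ‖x i - xstar‖)]
    have h5 : ⟪gradient (f i) (x i), xb - xstar⟫
        = ⟪gradient (f i) (x i), xb - x i⟫ - ⟪gradient (f i) (x i), xstar - x i⟫ := by
      rw [← inner_sub_right]
      congr 1
      abel
    have h7 : ‖xstar - x i‖ = ‖x i - xstar‖ := norm_sub_rev _ _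
    rw [h5]
    rw [h7] at h1
    have h3μ := mul_le_mul_of_nonneg_left h3 (by positivity : (0:ℝ) ≤ μ/4)
    linarith [h1, h2, h3μ]
  have hsum1 := Finset.sum_le_sum (fun i (_ : i ∈ univ) => hper i)
  have hexp : ∑ i, (f i xb - f i xstar + μ/4 * A - (L+μ)/2 * ‖xb - x i‖^2)
      = (∑ i, f i xb) - (∑ i, f i xstar) + (n:ℝ)*(μ/4*A) - (L+μ)/2*S := by
    rw [hS, Finset.sum_sub_distrib, Finset.sum_add_distrib, Finset.sum_sub_distrib,
      Finset.sum_const, card_univ, Fintype.card_fin, nsmul_eq_mul, ← Finset.mul_sum]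
  rw [hexp] at hsum1
  have hinner : ⟪g, xb - xstar⟫
      = (n:ℝ)⁻¹ * ∑ i, ⟪gradient (f i) (x i), xb - xstar⟫ := by
    rw [hgdef, real_inner_smul_left, sum_inner]
  have hP : FB - FS + μ/4*A - (L+μ)/2*((n:ℝ)⁻¹*S) ≤ ⟪g, xb - xstar⟫ := by
    have h8 := mul_le_mul_of_nonneg_left hsum1 hni0
    rw [← hinner] at h8
    have h9 : (n:ℝ)⁻¹ * ((∑ i, f i xb) - (∑ i, f i xstar) + (n:ℝ)*(μ/4*A) - (L+μ)/2*S)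
        = FB - FS + (μ/4*A)*((n:ℝ)⁻¹*(n:ℝ)) - (L+μ)/2*((n:ℝ)⁻¹*S) := by
      rw [hFB, hFS]; ring
    rw [h9, hni, mul_one] at h8
    linarith [h8]
  -- (H2)
  have he : g - GF = (n:ℝ)⁻¹ • ∑ i, (gradient (f i) (x i) - gradient (f i) xb) := by
    rw [hgdef, hGFdef, ← smul_sub, ← Finset.sum_sub_distrib]
  have he1 : ‖g - GF‖ ≤ (n:ℝ)⁻¹ * ∑ i, L * ‖x i - xb‖ := by
    rw [he]; exact havg _ _ fun i => hsmooth i (x i) xb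
  have hT2 : (∑ i, L * ‖x i - xb‖)^2 ≤ (n:ℝ) * ∑ i, (L * ‖x i - xb‖)^2 := by
    have := sq_sum_le_card_mul_sum_sq (s := (univ : Finset (Fin n)))
      (f := fun i => L * ‖x i - xb‖)
    simpa [card_univ] using this
  have hsumsq : ∑ i, (L * ‖x i - xb‖)^2 = L^2 * S := by
    rw [hS, Finset.mul_sum]
    refine Finset.sum_congr rfl fun i _ => ?_
    rw [norm_sub_rev]; ring
  have hE2 : ‖g - GF‖^2 ≤ L^2 * ((n:ℝ)⁻¹ * S) := by
    calc ‖g - GF‖^2 ≤ ((n:ℝ)⁻¹ * ∑ i, L*‖x i - xb‖)^2 :=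
          pow_le_pow_left₀ (norm_nonneg _) he1 2
      _ = ((n:ℝ)⁻¹)^2 * (∑ i, L*‖x i - xb‖)^2 := by ring
      _ ≤ ((n:ℝ)⁻¹)^2 * ((n:ℝ) * (L^2*S)) := by
          apply mul_le_mul_of_nonneg_left _ (by positivity)
          rw [← hsumsq]; exact hT2
      _ = ((n:ℝ)⁻¹*(n:ℝ)) * (L^2 * ((n:ℝ)⁻¹ * S)) := by ring
      _ = L^2 * ((n:ℝ)⁻¹ * S) := by rw [hni, one_mul]
  -- (H4)
  have hg2 : ‖g‖^2 ≤ 2*‖GF‖^2 + 2*‖g - GF‖^2 := by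
    have h1 : ‖g‖ ≤ ‖GF‖ + ‖g - GF‖ := by
      have := norm_add_le GF (g - GF)
      rwa [add_sub_cancel] at this
    nlinarith [h1, norm_nonneg g, norm_nonneg GF, norm_nonneg (g - GF),
      sq_nonneg (‖GF‖ - ‖g - GF‖)]
  -- expand the left side
  have hLHSeq : ‖xb - α • g - xstar‖^2
      = A - 2*α*⟪g, xb - xstar⟫ + α^2*‖g‖^2 := by
    rw [sub_right_comm, norm_sub_sq_real, real_inner_smul_right, real_inner_comm,
      norm_smul, Real.norm_eq_abs, mul_pow, sq_abs, hA]
    ring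
  rw [hLHSeq]
  -- convert the last coefficient
  have hfinal : (5 * α * L / (2 * (n:ℝ))) * S = 5/2*α*L*((n:ℝ)⁻¹*S) := by
    field_simp
  rw [hfinal]
  -- final accounting
  have hD0 : 0 ≤ FB - FS := by
    have := hstar xb
    rw [← hFB] at this
    linarith
  have hSn0 : 0 ≤ (n:ℝ)⁻¹ * S := mul_nonneg hni0 hS0
  have f1 := mul_le_mul_of_nonneg_left hP (by positivity : (0:ℝ) ≤ 2*α)
  have f2 := mul_le_mul_of_nonneg_left hg2 (sq_nonneg α)
  have f3 := mul_le_mul_of_nonneg_left hGF2 (sq_nonneg α)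
  have f4 := mul_le_mul_of_nonneg_left hE2 (sq_nonneg α)
  have f5 : 0 ≤ (α*(1 - 4*(α*L))) * (FB - FS) :=
    mul_nonneg (mul_nonneg hα0.le (by linarith)) hD0
  have f6 : 0 ≤ (α*L*(1 - 4*(α*L))) * ((n:ℝ)⁻¹*S) :=
    mul_nonneg (mul_nonneg (mul_nonneg hα0.le hL0.le) (by linarith)) hSn0
  have f7 : 0 ≤ (α*(L - μ)) * ((n:ℝ)⁻¹*S) :=
    mul_nonneg (mul_nonneg hα0.le (by linarith)) hSn0
  linarith [f1, f2, f3, f4, f5, f6, f7]
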